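/- arXiv:2405.09249 — 4 statements merged into one kernel-verified Lean document; each statement's English description precedes it below -/
import Mathlib

section
/- Let G be a 6-minimal subcubic graph (G² is not DP-6-colorable but the square of every proper subgraph of G is). Then G contains no 2-thread, i.e., no edge whose both endpoints have degree 2 in G. -/
open scoped Classical

universe u v

/-- `(H, L)` is a DP-cover of `G`: fibers are cliques, cross edges exist only between
fibers of adjacent vertices and form matchings, and all edges stay within the lists. -/
def IsDPCover {V : Type u} (G : SimpleGraph V) (L : V → Finset ℕ)
    (H : SimpleGraph (V × ℕ)) : Prop :=
  (∀ v : V, ∀ c ∈ L v, ∀ c' ∈ L v, c ≠ c' → H.Adj (v, c) (v, c')) ∧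
  (∀ u v : V, ∀ c c' : ℕ, H.Adj (u, c) (v, c') →
      c ∈ L u ∧ c' ∈ L v ∧ (u = v ∨ G.Adj u v)) ∧
  (∀ u v : V, u ≠ v → ∀ c c₁ c₂ : ℕ,
      H.Adj (u, c) (v, c₁) → H.Adj (u, c) (v, c₂) → c₁ = c₂)

/-- `G` is DP-`k`-colorable: every cover with lists of size at least `k` admits an
independent transversal (one vertex from each fiber, pairwise nonadjacent in `H`). -/
def DPColorable {V : Type u} (G : SimpleGraph V) (k : ℕ) : Prop :=
  ∀ (L : V → Finset ℕ) (H : SimpleGraph (V × ℕ)),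
    IsDPCover G L H → (∀ v, k ≤ (L v).card) →
    ∃ f : V → ℕ, (∀ v, f v ∈ L v) ∧
      ∀ u v : V, u ≠ v → ¬ H.Adj (u, f u) (v, f v)

noncomputable def dpChromaticNumber {V : Type u} (G : SimpleGraph V) : ℕ :=
  sInf {k | DPColorable G k}

/-- The square of a graph: join vertices at distance at most 2. -/
def graphSq {V : Type u} (G : SimpleGraph V) : SimpleGraph V where
  Adj u v := u ≠ v ∧ (G.Adj u v ∨ ∃ w, G.Adj u w ∧ G.Adj w v)
  symm := by
    constructor
    rintro u v ⟨h1, h2⟩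
    refine ⟨h1.symm, ?_⟩
    rcases h2 with h | ⟨w, hw1, hw2⟩
    · exact Or.inl h.symm
    · exact Or.inr ⟨w, hw2.symm, hw1.symm⟩
  loopless := ⟨fun v h => h.1 rfl⟩

/-- `G` is `k`-minimal: `G²` is not DP-`k`-colorable but the square of every proper
subgraph of `G` is DP-`k`-colorable. -/
def KMinimal {V : Type u} (G : SimpleGraph V) (k : ℕ) : Prop :=
  ¬ DPColorable (graphSq G) k ∧ ∀ H : SimpleGraph V, H < G → DPColorable (graphSq H) k

/-- `mad(G) < q`: every nonempty (induced) subgraph has average degree less than `q`.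
The filtered product counts each edge twice, i.e. it equals `2|E(H)|`. -/
def MadLT {V : Type u} [Fintype V] (G : SimpleGraph V) (q : ℚ) : Prop :=
  ∀ s : Finset V, s.Nonempty →
    ((((s ×ˢ s).filter fun p : V × V => G.Adj p.1 p.2).card : ℚ)) < q * s.card

/-- `H` is a minor of `G`. -/
def HasMinor {V : Type u} {W : Type v} (G : SimpleGraph V) (H : SimpleGraph W) : Prop :=
  ∃ f : W → Set V, (∀ w, (f w).Nonempty) ∧
    (∀ w, (G.induce (f w)).Connected) ∧
    (∀ w w', w ≠ w' → Disjoint (f w) (f w')) ∧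
    (∀ w w', H.Adj w w' → ∃ x ∈ f w, ∃ y ∈ f w', G.Adj x y)

/-- Planarity via Wagner's theorem: no `K₅` minor and no `K₃,₃` minor. -/
def PlanarGraph {V : Type u} (G : SimpleGraph V) : Prop :=
  ¬ HasMinor G (⊤ : SimpleGraph (Fin 5)) ∧
  ¬ HasMinor G (completeBipartiteGraph (Fin 3) (Fin 3))

/-- Helper: if each "bad" color has a witness in a small set `S`, injectively, then
a list of size 6 has a color with no witness. -/
lemma exists_good_color {α : Type*} (L : Finset ℕ) (hL : 6 ≤ L.card)
    (S : Finset α) (hS : S.card ≤ 5) (P : ℕ → Prop) (wit : ℕ → α)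
    (hwit : ∀ c ∈ L, P c → wit c ∈ S)
    (hinj : ∀ c1 ∈ L, ∀ c2 ∈ L, P c1 → P c2 → wit c1 = wit c2 → c1 = c2) :
    ∃ c ∈ L, ¬ P c := by
  by_contra h
  push_neg at h
  have : L.card ≤ S.card :=
    Finset.card_le_card_of_injOn wit (fun c hc => hwit c hc (h c hc))
      (fun c1 h1 c2 h2 he => hinj c1 h1 c2 h2 (h c1 h1) (h c2 h2) he)
  omega

/-- a 6-minimal subcubic graph contains no 2-thread. -/
theorem no_two_thread_of_6minimal {V : Type u} [Fintype V] (G : SimpleGraph V)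
    (hsub : ∀ v, G.degree v ≤ 3) (hmin : KMinimal G 6) :
    ∀ u v : V, G.Adj u v → ¬ (G.degree u = 2 ∧ G.degree v = 2) := by
  intro u v huv hdeg
  obtain ⟨hdu, hdv⟩ := hdeg
  have hne : u ≠ v := huv.ne
  -- the other neighbor of u
  obtain ⟨w, hwv, hNu⟩ : ∃ w, w ≠ v ∧ G.neighborFinset u = {v, w} := by
    obtain ⟨a, b, hab, hs⟩ := Finset.card_eq_two.mp hdu
    have hv : v ∈ G.neighborFinset u := by
      rw [SimpleGraph.mem_neighborFinset]; exact huv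
    rw [hs, Finset.mem_insert, Finset.mem_singleton] at hv
    rcases hv with rfl | rfl
    · exact ⟨b, fun h => hab h.symm, hs⟩
    · refine ⟨a, fun h => hab h, ?_⟩
      rw [hs]; ext c; simp [Finset.mem_insert, Finset.mem_singleton, or_comm]
  obtain ⟨x, hxu, hNv⟩ : ∃ x, x ≠ u ∧ G.neighborFinset v = {u, x} := by
    obtain ⟨a, b, hab, hs⟩ := Finset.card_eq_two.mp hdv
    have hu : u ∈ G.neighborFinset v := by
      rw [SimpleGraph.mem_neighborFinset]; exact huv.symm
    rw [hs, Finset.mem_insert, Finset.mem_singleton] at hu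
    rcases hu with rfl | rfl
    · exact ⟨b, fun h => hab h.symm, hs⟩
    · refine ⟨a, fun h => hab h, ?_⟩
      rw [hs]; ext c; simp [Finset.mem_insert, Finset.mem_singleton, or_comm]
  have huw : G.Adj u w := by
    rw [← SimpleGraph.mem_neighborFinset, hNu]; simp
  have hvx : G.Adj v x := by
    rw [← SimpleGraph.mem_neighborFinset, hNv]; simp
  -- characterize neighbors of u and v
  have hNu' : ∀ a, G.Adj u a → a = v ∨ a = w := by
    intro a ha
    have : a ∈ G.neighborFinset u := by rw [SimpleGraph.mem_neighborFinset]; exact ha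
    rw [hNu] at this; simpa using this
  have hNv' : ∀ a, G.Adj v a → a = u ∨ a = x := by
    intro a ha
    have : a ∈ G.neighborFinset v := by rw [SimpleGraph.mem_neighborFinset]; exact ha
    rw [hNv] at this; simpa using this
  -- the graph with edge uv deleted
  set Huv : SimpleGraph V := G.deleteEdges {s(u, v)} with hHuv
  have hHle : Huv ≤ G := SimpleGraph.deleteEdges_le _
  have hHadj : ∀ a b : V, Huv.Adj a b ↔ G.Adj a b ∧ ¬ s(a, b) = s(u, v) := by
    intro a b; rw [hHuv, SimpleGraph.deleteEdges_adj]; simp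
  have hHlt : Huv < G := by
    refine lt_of_le_of_ne hHle (fun h => ?_)
    have : Huv.Adj u v := h ▸ huv
    rw [hHadj] at this
    exact this.2 rfl
  have hcol := hmin.2 Huv hHlt
  apply hmin.1
  intro L H' hcover hcard
  obtain ⟨hcl, hcr, hmat⟩ := hcover
  -- the restricted cover
  set H'' : SimpleGraph (V × ℕ) :=
    { Adj := fun p q => H'.Adj p q ∧ (p.1 = q.1 ∨ (graphSq Huv).Adj p.1 q.1)
      symm := by
        constructor
        rintro p q ⟨h1, h2⟩
        exact ⟨h1.symm, by rcases h2 with h | h; exact Or.inl h.symm; exact Or.inr h.symm⟩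
      loopless := ⟨fun p h => H'.loopless.irrefl p h.1⟩ } with hH''
  have hcov'' : IsDPCover (graphSq Huv) L H'' := by
    refine ⟨fun a c hc c' hc' hcc => ⟨hcl a c hc c' hc' hcc, Or.inl rfl⟩, ?_, ?_⟩
    · intro a b c c' h
      obtain ⟨h1, h2⟩ := h
      obtain ⟨hc, hc', _⟩ := hcr a b c c' h1
      refine ⟨hc, hc', ?_⟩
      rcases h2 with h | h
      · exact Or.inl h
      · exact Or.inr h
    · intro a b hab c c1 c2 h1 h2
      exact hmat a b hab c c1 c2 h1.1 h2.1
  obtain ⟨f, hfL, hf⟩ := hcol L H'' hcov'' hcard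
  -- recolor u
  set Su : Finset V :=
    insert w ((G.neighborFinset v).erase u ∪ (G.neighborFinset w).erase u) with hSu
  have huNw : u ∈ G.neighborFinset w := by
    rw [SimpleGraph.mem_neighborFinset]; exact huw.symm
  have huNv2 : u ∈ G.neighborFinset v := by
    rw [SimpleGraph.mem_neighborFinset]; exact huv.symm
  have hSucard : Su.card ≤ 5 := by
    have h1 : ((G.neighborFinset v).erase u).card = 1 := by
      rw [Finset.card_erase_of_mem huNv2, SimpleGraph.card_neighborFinset_eq_degree, hdv]
    have h2 : ((G.neighborFinset w).erase u).card ≤ 2 := by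
      rw [Finset.card_erase_of_mem huNw, SimpleGraph.card_neighborFinset_eq_degree]
      have := hsub w
      omega
    calc Su.card ≤ ((G.neighborFinset v).erase u ∪ (G.neighborFinset w).erase u).card + 1 :=
          Finset.card_insert_le _ _
      _ ≤ ((G.neighborFinset v).erase u).card + ((G.neighborFinset w).erase u).card + 1 := by
          have := Finset.card_union_le ((G.neighborFinset v).erase u)
            ((G.neighborFinset w).erase u)
          omega
      _ ≤ 5 := by omega
  -- any G²-neighbor of u other than v lies in Su
  have hmemSu : ∀ a : V, a ≠ u → a ≠ v → (graphSq G).Adj a u → a ∈ Su := by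
    intro a hau hav hadj
    obtain ⟨_, h⟩ := hadj
    rcases h with h | ⟨m, hm1, hm2⟩
    · rcases hNu' a h.symm with h' | h'
      · exact absurd h' hav
      · rw [hSu, h']; exact Finset.mem_insert_self _ _
    · rcases hNu' m hm2.symm with rfl | rfl
      · refine Finset.mem_insert_of_mem (Finset.mem_union_left _ ?_)
        exact Finset.mem_erase.mpr ⟨hau, by rw [SimpleGraph.mem_neighborFinset]; exact hm1.symm⟩
      · refine Finset.mem_insert_of_mem (Finset.mem_union_right _ ?_)
        exact Finset.mem_erase.mpr ⟨hau, by rw [SimpleGraph.mem_neighborFinset]; exact hm1.symm⟩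
  set Pu : ℕ → Prop := fun c => ∃ a, a ≠ u ∧ a ≠ v ∧ H'.Adj (a, f a) (u, c) with hPu
  set witu : ℕ → V := fun c => if h : Pu c then h.choose else u with hwitu
  obtain ⟨cu, hcuL, hcuP⟩ : ∃ c ∈ L u, ¬ Pu c := by
    refine exists_good_color (L u) (hcard u) Su hSucard Pu witu ?_ ?_
    · intro c _ hc
      simp only [hwitu]; rw [dif_pos hc]
      obtain ⟨hau, hav, hadj⟩ := hc.choose_spec
      obtain ⟨_, _, h⟩ := hcr _ _ _ _ hadj
      rcases h with h | h
      · exact absurd h hau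
      · exact hmemSu _ hau hav h
    · intro c1 hc1 c2 hc2 h1 h2 he
      simp only [hwitu] at he; rw [dif_pos h1, dif_pos h2] at he
      obtain ⟨ha1u, _, hadj1⟩ := h1.choose_spec
      obtain ⟨ha2u, _, hadj2⟩ := h2.choose_spec
      rw [← he] at hadj2
      exact hmat _ u ha1u (f h1.choose) c1 c2 hadj1 hadj2
  -- recolor v
  set f' : V → ℕ := Function.update f u cu with hf'
  set Tv : Finset V :=
    insert u (insert x ((G.neighborFinset u).erase v ∪ (G.neighborFinset x).erase v)) with hTv
  have hvNx : v ∈ G.neighborFinset x := by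
    rw [SimpleGraph.mem_neighborFinset]; exact hvx.symm
  have hvNu2 : v ∈ G.neighborFinset u := by
    rw [SimpleGraph.mem_neighborFinset]; exact huv
  have hTvcard : Tv.card ≤ 5 := by
    have h1 : ((G.neighborFinset u).erase v).card = 1 := by
      rw [Finset.card_erase_of_mem hvNu2, SimpleGraph.card_neighborFinset_eq_degree, hdu]
    have h2 : ((G.neighborFinset x).erase v).card ≤ 2 := by
      rw [Finset.card_erase_of_mem hvNx, SimpleGraph.card_neighborFinset_eq_degree]
      have := hsub x
      omega
    calc Tv.card ≤ (insert x ((G.neighborFinset u).erase v ∪ (G.neighborFinset x).erase v)).card + 1 :=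
          Finset.card_insert_le _ _
      _ ≤ ((G.neighborFinset u).erase v ∪ (G.neighborFinset x).erase v).card + 2 := by
          have := Finset.card_insert_le x ((G.neighborFinset u).erase v ∪ (G.neighborFinset x).erase v)
          omega
      _ ≤ 5 := by
          have := Finset.card_union_le ((G.neighborFinset u).erase v)
            ((G.neighborFinset x).erase v)
          omega
  have hmemTv : ∀ a : V, a ≠ v → (graphSq G).Adj a v → a ∈ Tv := by
    intro a hav hadj
    by_cases hau : a = u
    · rw [hTv, hau]; exact Finset.mem_insert_self _ _
    obtain ⟨_, h⟩ := hadj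
    rcases h with h | ⟨m, hm1, hm2⟩
    · rcases hNv' a h.symm with h' | h'
      · exact absurd h' hau
      · rw [hTv, h']; exact Finset.mem_insert_of_mem (Finset.mem_insert_self _ _)
    · rcases hNv' m hm2.symm with rfl | rfl
      · refine Finset.mem_insert_of_mem (Finset.mem_insert_of_mem (Finset.mem_union_left _ ?_))
        exact Finset.mem_erase.mpr ⟨hav, by rw [SimpleGraph.mem_neighborFinset]; exact hm1.symm⟩
      · refine Finset.mem_insert_of_mem (Finset.mem_insert_of_mem (Finset.mem_union_right _ ?_))
        exact Finset.mem_erase.mpr ⟨hav, by rw [SimpleGraph.mem_neighborFinset]; exact hm1.symm⟩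
  set Pv : ℕ → Prop := fun c => ∃ a, a ≠ v ∧ H'.Adj (a, f' a) (v, c) with hPv
  set witv : ℕ → V := fun c => if h : Pv c then h.choose else v with hwitv
  obtain ⟨cv, hcvL, hcvP⟩ : ∃ c ∈ L v, ¬ Pv c := by
    refine exists_good_color (L v) (hcard v) Tv hTvcard Pv witv ?_ ?_
    · intro c _ hc
      simp only [hwitv]; rw [dif_pos hc]
      obtain ⟨hav, hadj⟩ := hc.choose_spec
      obtain ⟨_, _, h⟩ := hcr _ _ _ _ hadj
      rcases h with h | h
      · exact absurd h hav
      · exact hmemTv _ hav h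
    · intro c1 hc1 c2 hc2 h1 h2 he
      simp only [hwitv] at he; rw [dif_pos h1, dif_pos h2] at he
      obtain ⟨ha1v, hadj1⟩ := h1.choose_spec
      obtain ⟨ha2v, hadj2⟩ := h2.choose_spec
      rw [← he] at hadj2
      exact hmat _ v ha1v (f' h1.choose) c1 c2 hadj1 hadj2
  -- the final coloring
  set g : V → ℕ := Function.update f' v cv with hg
  have hgu : g u = cu := by
    rw [hg, Function.update_of_ne hne, hf', Function.update_self]
  have hgv : g v = cv := by rw [hg, Function.update_self]
  have hgother : ∀ a, a ≠ u → a ≠ v → g a = f a := by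
    intro a hau hav
    rw [hg, Function.update_of_ne hav, hf', Function.update_of_ne hau]
  have hgf' : ∀ a, a ≠ v → g a = f' a := by
    intro a hav
    rw [hg, Function.update_of_ne hav]
  refine ⟨g, ?_, ?_⟩
  · intro a
    by_cases hav : a = v
    · rw [hav, hgv]; exact hcvL
    by_cases hau : a = u
    · rw [hau, hgu]; exact hcuL
    · rw [hgother a hau hav]; exact hfL a
  · intro a b hab hadj
    -- symmetric wlog style: handle by cases
    by_cases hbv : b = v
    · subst hbv
      rw [hgv] at hadj
      exact hcvP ⟨a, hab, by rw [← hgf' a hab]; exact hadj⟩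
    by_cases hav : a = v
    · subst hav
      rw [hgv] at hadj
      exact hcvP ⟨b, fun h => hab h.symm, by rw [← hgf' b hbv]; exact hadj.symm⟩
    by_cases hbu : b = u
    · subst hbu
      rw [hgu, hgother a (fun h => hab h) hav] at hadj
      exact hcuP ⟨a, hab, hav, hadj⟩
    by_cases hau : a = u
    · subst hau
      rw [hgu, hgother b hbu hbv] at hadj
      exact hcuP ⟨b, fun h => hab h.symm, hbv, hadj.symm⟩
    -- both differ from u, v : use f
    rw [hgother a hau hav, hgother b hbu hbv] at hadj
    -- the adjacency must come from G²; show it is in Huv²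
    obtain ⟨_, _, h⟩ := hcr _ _ _ _ hadj
    rcases h with h | h
    · exact hab h
    · -- show (graphSq Huv).Adj a b
      have hsq : (graphSq Huv).Adj a b := by
        obtain ⟨hne', h2⟩ := h
        refine ⟨hne', ?_⟩
        have hedge : ∀ c d : V, c ≠ u → c ≠ v → G.Adj c d → Huv.Adj c d := by
          intro c d hcu hcv hcd
          rw [hHadj]
          refine ⟨hcd, fun hs => ?_⟩
          rw [Sym2.eq_iff] at hs
          rcases hs with ⟨h1, _⟩ | ⟨h1, _⟩
          · exact hcu h1
          · exact hcv h1
        rcases h2 with h2 | ⟨m, hm1, hm2⟩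
        · exact Or.inl (hedge a b hau hav h2)
        · exact Or.inr ⟨m, hedge a m hau hav hm1, (hedge b m hbu hbv hm2.symm).symm⟩
      exact hf a b hab ⟨hadj, Or.inr hsq⟩
end

section
/- Let G be a 6-minimal subcubic graph. Then G does not contain a 4-cycle v1v2v3v4 in which v1 and v3 have degree 3 in G and v2 and v4 have degree 2 in G. -/
open scoped Classical

universe u v

/-- a 6-minimal subcubic graph contains no 4-cycle whose two
nonadjacent vertices have degree 3 while the other two have degree 2. -/
theorem no_bad_four_cycle_of_6minimal {V : Type u} [Fintype V] (G : SimpleGraph V)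
    (hsub : ∀ v, G.degree v ≤ 3) (hmin : KMinimal G 6) :
    ¬ ∃ v₁ v₂ v₃ v₄ : V, v₁ ≠ v₃ ∧ v₂ ≠ v₄ ∧
      G.Adj v₁ v₂ ∧ G.Adj v₂ v₃ ∧ G.Adj v₃ v₄ ∧ G.Adj v₄ v₁ ∧
      G.degree v₁ = 3 ∧ G.degree v₃ = 3 ∧ G.degree v₂ = 2 ∧ G.degree v₄ = 2 := by
  rintro ⟨v₁, v₂, v₃, v₄, h13, h24, a12, a23, a34, a41, d1, d3, d2, d4⟩
  have n12 : v₁ ≠ v₂ := a12.ne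
  have n23 : v₂ ≠ v₃ := a23.ne
  have n34 : v₃ ≠ v₄ := a34.ne
  have n41 : v₄ ≠ v₁ := a41.ne
  -- neighbors of v₂ are exactly v₁ and v₃
  have hnbr : ∀ w, G.Adj v₂ w → w = v₁ ∨ w = v₃ := by
    intro w hw
    have hsubset : ({v₁, v₃} : Finset V) ⊆ G.neighborFinset v₂ := by
      intro x hx
      simp only [Finset.mem_insert, Finset.mem_singleton] at hx
      rcases hx with rfl | rfl
      · simpa [SimpleGraph.mem_neighborFinset] using a12.symm
      · simpa [SimpleGraph.mem_neighborFinset] using a23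
    have hcard2 : (G.neighborFinset v₂).card ≤ ({v₁, v₃} : Finset V).card := by
      rw [G.card_neighborFinset_eq_degree, d2,
        Finset.card_insert_of_notMem (by simpa using h13), Finset.card_singleton]
    have heq := Finset.eq_of_subset_of_card_le hsubset hcard2
    have hmem : w ∈ ({v₁, v₃} : Finset V) := by
      rw [heq]; simpa [SimpleGraph.mem_neighborFinset] using hw
    simpa using hmem
  set Hsub : SimpleGraph V := G.deleteEdges {s(v₁, v₂)} with hHsub
  have hsubAdj : ∀ u v, Hsub.Adj u v ↔
      G.Adj u v ∧ ¬(u = v₁ ∧ v = v₂ ∨ u = v₂ ∧ v = v₁) := by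
    intro u v
    rw [hHsub, SimpleGraph.deleteEdges_adj]
    simp [Sym2.eq_iff]
  have hlt : Hsub < G := by
    refine lt_of_le_of_ne (SimpleGraph.deleteEdges_le _) ?_
    intro h
    have hA : Hsub.Adj v₁ v₂ := by rw [h]; exact a12
    rw [hsubAdj] at hA
    exact hA.2 (Or.inl ⟨rfl, rfl⟩)
  have hDPsub : DPColorable (graphSq Hsub) 6 := hmin.2 Hsub hlt
  apply hmin.1
  intro L H' hcov hcard
  obtain ⟨hc1, hc2, hc3⟩ := hcov
  -- surviving edges in the square
  have hE14 : Hsub.Adj v₁ v₄ := by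
    rw [hsubAdj]
    refine ⟨a41.symm, ?_⟩
    rintro (⟨-, h⟩ | ⟨h, -⟩)
    · exact h24 h.symm
    · exact n12 h
  have hE43 : Hsub.Adj v₄ v₃ := by
    rw [hsubAdj]
    refine ⟨a34.symm, ?_⟩
    rintro (⟨h, -⟩ | ⟨h, -⟩)
    · exact n41 h
    · exact h24 h.symm
  -- square adjacencies away from v₂ survive
  have key1 : ∀ u v : V, u ≠ v₂ → v ≠ v₂ → (graphSq G).Adj u v → (graphSq Hsub).Adj u v := by
    intro u v hu hv h
    obtain ⟨hne, hadj⟩ := h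
    refine ⟨hne, ?_⟩
    rcases hadj with h | ⟨w, hw1, hw2⟩
    · refine Or.inl ((hsubAdj u v).2 ⟨h, ?_⟩)
      rintro (⟨-, h'⟩ | ⟨h', -⟩)
      · exact hv h'
      · exact hu h'
    · by_cases hw : w = v₂
      · subst hw
        rcases hnbr u hw1.symm with rfl | rfl <;> rcases hnbr v hw2 with rfl | rfl
        · exact absurd rfl hne
        · exact Or.inr ⟨v₄, hE14, hE43⟩
        · exact Or.inr ⟨v₄, hE43.symm, hE14.symm⟩
        · exact absurd rfl hne
      · refine Or.inr ⟨w, (hsubAdj u w).2 ⟨hw1, ?_⟩, (hsubAdj w v).2 ⟨hw2, ?_⟩⟩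
        · rintro (⟨-, h'⟩ | ⟨h', -⟩)
          · exact hw h'
          · exact hu h'
        · rintro (⟨-, h'⟩ | ⟨h', -⟩)
          · exact hv h'
          · exact hw h'
  -- restrict the cover to the square of Hsub
  set H'' : SimpleGraph (V × ℕ) :=
    { Adj := fun a b => H'.Adj a b ∧ (a.1 = b.1 ∨ (graphSq Hsub).Adj a.1 b.1)
      symm := by
        constructor
        rintro a b ⟨h1, h2⟩
        exact ⟨h1.symm, h2.imp Eq.symm (fun h => h.symm)⟩
      loopless := ⟨fun a h => H'.loopless.irrefl a h.1⟩ } with hH''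
  have hcov'' : IsDPCover (graphSq Hsub) L H'' := by
    refine ⟨?_, ?_, ?_⟩
    · intro v c hc c' hc' hne
      exact ⟨hc1 v c hc c' hc' hne, Or.inl rfl⟩
    · rintro u v c c' ⟨hadj, hor⟩
      obtain ⟨h1, h2, -⟩ := hc2 u v c c' hadj
      exact ⟨h1, h2, hor⟩
    · rintro u v hne c c₁ c₂ ⟨h1, -⟩ ⟨h2, -⟩
      exact hc3 u v hne c c₁ c₂ h1 h2
  obtain ⟨f, hfL, hf⟩ := hDPsub L H'' hcov'' hcard
  -- the square-neighborhood of v₂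
  set T : Finset V := ((G.neighborFinset v₁ ∪ G.neighborFinset v₃).erase v₂) ∪ {v₁, v₃} with hT
  have hTmem : ∀ u, (graphSq G).Adj v₂ u → u ∈ T := by
    intro u h
    obtain ⟨hne, h | ⟨w, hw1, hw2⟩⟩ := h
    · rcases hnbr u h with rfl | rfl <;> simp [hT]
    · rcases hnbr w hw1 with rfl | rfl
      · exact Finset.mem_union_left _ (Finset.mem_erase.2 ⟨hne.symm,
          Finset.mem_union_left _ (by simpa [SimpleGraph.mem_neighborFinset] using hw2)⟩)
      · exact Finset.mem_union_left _ (Finset.mem_erase.2 ⟨hne.symm,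
          Finset.mem_union_right _ (by simpa [SimpleGraph.mem_neighborFinset] using hw2)⟩)
  have hcardN : ∀ v, (G.neighborFinset v).card ≤ 3 := fun v => by
    rw [G.card_neighborFinset_eq_degree]; exact hsub v
  have hTcard : T.card ≤ 5 := by
    have hinter : ({v₂, v₄} : Finset V) ⊆ G.neighborFinset v₁ ∩ G.neighborFinset v₃ := by
      intro x hx
      simp only [Finset.mem_insert, Finset.mem_singleton] at hx
      rcases hx with rfl | rfl
      · simp only [Finset.mem_inter, SimpleGraph.mem_neighborFinset]
        exact ⟨a12, a23.symm⟩
      · simp only [Finset.mem_inter, SimpleGraph.mem_neighborFinset]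
        exact ⟨a41.symm, a34⟩
    have h2le : 2 ≤ (G.neighborFinset v₁ ∩ G.neighborFinset v₃).card := by
      have hc24 : ({v₂, v₄} : Finset V).card = 2 := by
        rw [Finset.card_insert_of_notMem (by simpa using h24), Finset.card_singleton]
      rw [← hc24]
      exact Finset.card_le_card hinter
    have hunion : (G.neighborFinset v₁ ∪ G.neighborFinset v₃).card ≤ 4 := by
      have h := Finset.card_union_add_card_inter (G.neighborFinset v₁) (G.neighborFinset v₃)
      have h1 := hcardN v₁
      have h3 := hcardN v₃
      omega
    have hv2mem : v₂ ∈ G.neighborFinset v₁ ∪ G.neighborFinset v₃ :=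
      Finset.mem_union_left _ (by simpa [SimpleGraph.mem_neighborFinset] using a12)
    have herase : ((G.neighborFinset v₁ ∪ G.neighborFinset v₃).erase v₂).card ≤ 3 := by
      rw [Finset.card_erase_of_mem hv2mem]; omega
    have h13c : ({v₁, v₃} : Finset V).card ≤ 2 :=
      (Finset.card_insert_le _ _).trans (by simp)
    calc T.card ≤ _ + ({v₁, v₃} : Finset V).card := Finset.card_union_le _ _
      _ ≤ 3 + 2 := by omega
      _ = 5 := rfl
  have hTne : ∀ u ∈ T, u ≠ v₂ := by
    intro u hu
    rw [hT] at hu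
    rcases Finset.mem_union.1 hu with h | h
    · exact Finset.ne_of_mem_erase h
    · simp only [Finset.mem_insert, Finset.mem_singleton] at h
      rcases h with rfl | rfl
      · exact n12
      · exact n23.symm
  -- forbidden colors for v₂
  set Bad : Finset ℕ :=
    T.biUnion (fun u => (L v₂).filter (fun c => H'.Adj (v₂, c) (u, f u))) with hBad
  have hBadcard : Bad.card ≤ 5 := by
    calc Bad.card ≤ ∑ u ∈ T, ((L v₂).filter (fun c => H'.Adj (v₂, c) (u, f u))).card :=
          Finset.card_biUnion_le
      _ ≤ ∑ _u ∈ T, 1 := by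
          refine Finset.sum_le_sum (fun u hu => Finset.card_le_one.2 (fun c hc c' hc' => ?_))
          exact hc3 u v₂ (hTne u hu) (f u) c c'
            ((Finset.mem_filter.1 hc).2.symm) ((Finset.mem_filter.1 hc').2.symm)
      _ = T.card := by simp
      _ ≤ 5 := hTcard
  have hnonempty : (L v₂ \ Bad).Nonempty := by
    rcases Finset.eq_empty_or_nonempty (L v₂ \ Bad) with h | h
    · exfalso
      have hsub' : L v₂ ⊆ Bad := Finset.sdiff_eq_empty_iff_subset.1 h
      have h1 := Finset.card_le_card hsub'
      have h2 := hcard v₂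
      omega
    · exact h
  obtain ⟨c, hc⟩ := hnonempty
  obtain ⟨hcL, hcB⟩ := Finset.mem_sdiff.1 hc
  refine ⟨Function.update f v₂ c, ?_, ?_⟩
  · intro v
    by_cases h : v = v₂
    · subst h; simpa using hcL
    · rw [Function.update_of_ne h]; exact hfL v
  · intro u v huv hadj
    have hnoc : ∀ w, w ≠ v₂ → ¬ H'.Adj (v₂, c) (w, f w) := by
      intro w hw h
      obtain ⟨-, -, hor⟩ := hc2 v₂ w c (f w) h
      have hadj2 : (graphSq G).Adj v₂ w := hor.resolve_left (fun e => hw e.symm)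
      exact hcB (Finset.mem_biUnion.2 ⟨w, hTmem w hadj2, Finset.mem_filter.2 ⟨hcL, h⟩⟩)
    by_cases hu : u = v₂
    · have hv : v ≠ v₂ := fun e => huv (hu.trans e.symm)
      rw [hu, Function.update_self, Function.update_of_ne hv] at hadj
      exact hnoc v hv hadj
    · by_cases hv : v = v₂
      · rw [hv, Function.update_self, Function.update_of_ne hu] at hadj
        exact hnoc u hu hadj.symm
      · rw [Function.update_of_ne hu, Function.update_of_ne hv] at hadj
        obtain ⟨-, -, hor⟩ := hc2 u v (f u) (f v) hadj
        have hadjG : (graphSq G).Adj u v := hor.resolve_left huv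
        exact hf u v huv ⟨hadj, Or.inr (key1 u v hu hv hadjG)⟩
end

section
/- Every subcubic graph G with mad(G) < 9/4 has a square G² that is DP-5-colorable. -/
open scoped Classical

universe u v

open Finset in
private lemma prod_filter_card {V : Type u} [Fintype V] (G : SimpleGraph V) (A B : Finset V) :
    ((A ×ˢ B).filter fun p : V × V => G.Adj p.1 p.2).card
      = ∑ a ∈ A, (B.filter fun b => G.Adj a b).card := by
  rw [Finset.card_filter, Finset.sum_product]
  exact Finset.sum_congr rfl fun a _ => (Finset.card_filter _ _).symm

open Finset in
private lemma sum_adj_comm {V : Type u} [Fintype V] (G : SimpleGraph V) (A B : Finset V) :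
    ∑ a ∈ A, (B.filter fun b => G.Adj a b).card
      = ∑ b ∈ B, (A.filter fun a => G.Adj b a).card := by
  simp only [Finset.card_filter]
  rw [Finset.sum_comm]
  exact Finset.sum_congr rfl fun b _ => Finset.sum_congr rfl fun a _ =>
    if_congr (G.adj_comm a b) rfl rfl

open Finset in
private lemma dp_of_degenerate {V : Type u} [Fintype V] (Q : SimpleGraph V)
    (hdeg : ∀ t : Finset V, t.Nonempty → ∃ v ∈ t, (t.filter fun u => Q.Adj v u).card ≤ 4) :
    DPColorable Q 5 := by
  intro L H hcov hL
  obtain ⟨h1, h2, h3⟩ := hcov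
  have hLne : ∀ v, (L v).Nonempty := fun v => Finset.card_pos.mp (by have := hL v; omega)
  suffices h : ∀ (n : ℕ) (s : Finset V), s.card = n → ∃ f : V → ℕ, (∀ v, f v ∈ L v) ∧
      ∀ u ∈ s, ∀ w ∈ s, u ≠ w → ¬ H.Adj (u, f u) (w, f w) by
    obtain ⟨f, hf1, hf2⟩ := h _ Finset.univ rfl
    exact ⟨f, hf1, fun u v huv => hf2 u (mem_univ u) v (mem_univ v) huv⟩
  intro n
  induction n with
  | zero =>
    intro s hs
    refine ⟨fun v => (L v).min' (hLne v), fun v => (L v).min'_mem _, ?_⟩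
    intro u hu
    rw [Finset.card_eq_zero.mp hs] at hu
    exact absurd hu (Finset.notMem_empty u)
  | succ n ih =>
    intro s hs
    have hne : s.Nonempty := Finset.card_pos.mp (by omega)
    obtain ⟨v, hvs, hv4⟩ := hdeg s hne
    obtain ⟨f, hf1, hf2⟩ := ih (s.erase v) (by rw [Finset.card_erase_of_mem hvs, hs]; rfl)
    set B := (L v).filter (fun c => ∃ u ∈ s.erase v, H.Adj (v, c) (u, f u)) with hB
    -- map each blocked color to the neighbor blocking it
    have hBcard : B.card ≤ 4 := by
      set g : V → ℕ := fun u => if h : ∃ c, H.Adj (v, c) (u, f u) then h.choose else 0 with hg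
      have hsub : B ⊆ (s.filter fun u => Q.Adj v u).image g := by
        intro c hc
        obtain ⟨hcL, u, hu, hadj⟩ := Finset.mem_filter.mp hc
        have huv : u ≠ v := (Finset.mem_erase.mp hu).1
        have hQ : Q.Adj v u := by
          rcases (h2 v u c (f u) hadj).2.2 with h | h
          · exact absurd h.symm huv
          · exact h
        refine Finset.mem_image.mpr ⟨u, Finset.mem_filter.mpr ⟨(Finset.mem_erase.mp hu).2, hQ⟩, ?_⟩
        have hex : ∃ c', H.Adj (v, c') (u, f u) := ⟨c, hadj⟩
        have hspec := hex.choose_spec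
        have : hex.choose = c :=
          h3 u v huv (f u) hex.choose c hspec.symm hadj.symm
        simp only [hg]
        rw [dif_pos hex, this]
      calc B.card ≤ ((s.filter fun u => Q.Adj v u).image g).card := Finset.card_le_card hsub
        _ ≤ (s.filter fun u => Q.Adj v u).card := Finset.card_image_le
        _ ≤ 4 := hv4
    have hnotsub : ¬ L v ⊆ B := fun h => by have := Finset.card_le_card h; have := hL v; omega
    obtain ⟨c, hcL, hcB⟩ := Finset.not_subset.mp hnotsub
    refine ⟨Function.update f v c, ?_, ?_⟩
    · intro w
      by_cases hw : w = v
      · subst hw; rw [Function.update_self]; exact hcL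
      · rw [Function.update_of_ne hw]; exact hf1 w
    · intro u hu w hw huw hadj
      by_cases huv : u = v <;> by_cases hwv : w = v
      · exact huw (huv.trans hwv.symm)
      · subst huv
        rw [Function.update_self, Function.update_of_ne hwv] at hadj
        exact hcB (Finset.mem_filter.mpr ⟨hcL, w, Finset.mem_erase.mpr ⟨hwv, hw⟩, hadj⟩)
      · subst hwv
        rw [Function.update_self, Function.update_of_ne huv] at hadj
        exact hcB (Finset.mem_filter.mpr ⟨hcL, u, Finset.mem_erase.mpr ⟨huv, hu⟩, hadj.symm⟩)
      · rw [Function.update_of_ne huv, Function.update_of_ne hwv] at hadj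
        exact hf2 u (Finset.mem_erase.mpr ⟨huv, hu⟩) w (Finset.mem_erase.mpr ⟨hwv, hw⟩) huw hadj

open Finset in
private lemma exists_low_sq_deg {V : Type u} [Fintype V] (G : SimpleGraph V)
    (hsub : ∀ v, G.degree v ≤ 3) (hmad : MadLT G (9/4))
    (s : Finset V) (hne : s.Nonempty) :
    ∃ v ∈ s, (s.filter fun u => (graphSq G).Adj v u).card ≤ 4 := by
  by_contra hcon
  push_neg at hcon
  set degS : V → ℕ := fun x => (s.filter fun u => G.Adj x u).card with hdegS
  have hdeg3 : ∀ x, degS x ≤ 3 := by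
    intro x
    have h1 : (s.filter fun u => G.Adj x u) ⊆ G.neighborFinset x := by
      intro u hu
      rw [SimpleGraph.mem_neighborFinset]
      exact (Finset.mem_filter.mp hu).2
    have h2 : (G.neighborFinset x).card = G.degree x := rfl
    have := Finset.card_le_card h1
    have h3 := hsub x
    simp only [hdegS]
    omega
  set X : Finset V := Finset.univ.filter fun x => x ∉ s ∧ degS x = 3 with hX
  set Y : Finset V := Finset.univ.filter fun x => x ∉ s ∧ degS x = 2 with hY
  -- per-vertex discharging inequality
  have key : ∀ v ∈ s, 18 + (if degS v = 3 then 6 else 0) ≤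
      8 * degS v + 10 * (X.filter fun x => G.Adj v x).card
        + 7 * (Y.filter fun x => G.Adj v x).card
        + 2 * ((s.filter fun u => G.Adj v u).filter fun x => degS x = 3).card := by
    intro v hv
    have hQ5 : 5 ≤ (s.filter fun u => (graphSq G).Adj v u).card := hcon v hv
    set Uv : Finset V := Finset.univ.filter fun x => G.Adj v x with hUv
    set NS : Finset V := s.filter fun u => G.Adj v u with hNS
    set A : V → Finset V := fun x => if x ∈ s
      then ((insert x (s.filter fun u => G.Adj x u)).erase v)
      else ((s.filter fun u => G.Adj x u).erase v) with hA
    have hcov2 : (s.filter fun u => (graphSq G).Adj v u) ⊆ Uv.biUnion A := by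
      intro u hu
      obtain ⟨hus, hQadj⟩ := Finset.mem_filter.mp hu
      obtain ⟨hne', hadj⟩ := hQadj
      rcases hadj with h | ⟨w, hw1, hw2⟩
      · refine Finset.mem_biUnion.mpr ⟨u, Finset.mem_filter.mpr ⟨Finset.mem_univ u, h⟩, ?_⟩
        simp only [hA]
        rw [if_pos hus]
        exact Finset.mem_erase.mpr ⟨Ne.symm hne', Finset.mem_insert_self u _⟩
      · refine Finset.mem_biUnion.mpr ⟨w, Finset.mem_filter.mpr ⟨Finset.mem_univ w, hw1⟩, ?_⟩
        simp only [hA]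
        split_ifs
        · exact Finset.mem_erase.mpr ⟨Ne.symm hne',
            Finset.mem_insert_of_mem (Finset.mem_filter.mpr ⟨hus, hw2⟩)⟩
        · exact Finset.mem_erase.mpr ⟨Ne.symm hne', Finset.mem_filter.mpr ⟨hus, hw2⟩⟩
    have hbound : ∀ x ∈ Uv, (A x).card ≤ (if x ∈ s then degS x else 0)
        + ((if x ∉ s ∧ degS x = 3 then 2 else 0) + (if x ∉ s ∧ degS x = 2 then 1 else 0)) := by
      intro x hx
      have hadjvx : G.Adj v x := (Finset.mem_filter.mp hx).2
      have hvmem : v ∈ s.filter fun u => G.Adj x u :=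
        Finset.mem_filter.mpr ⟨hv, hadjvx.symm⟩
      have hd1 : 1 ≤ degS x := Finset.card_pos.mpr ⟨v, hvmem⟩
      have hd3 := hdeg3 x
      have hdx : degS x = (s.filter fun u => G.Adj x u).card := rfl
      simp only [hA]
      by_cases hxs : x ∈ s
      · rw [if_pos hxs, if_pos hxs]
        have e1 := Finset.card_erase_of_mem (Finset.mem_insert_of_mem hvmem :
          v ∈ insert x (s.filter fun u => G.Adj x u))
        have e2 := Finset.card_insert_le x (s.filter fun u => G.Adj x u)
        have e3 : (if x ∉ s ∧ degS x = 3 then 2 else 0) = 0 := by simp [hxs]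
        have e4 : (if x ∉ s ∧ degS x = 2 then 1 else 0) = 0 := by simp [hxs]
        rw [e3, e4]
        omega
      · rw [if_neg hxs, if_neg hxs]
        have e1 := Finset.card_erase_of_mem hvmem
        by_cases h3 : degS x = 3
        · rw [if_pos ⟨hxs, h3⟩]; omega
        · rw [if_neg (by tauto : ¬ (x ∉ s ∧ degS x = 3))]
          by_cases h2 : degS x = 2
          · rw [if_pos ⟨hxs, h2⟩]; omega
          · rw [if_neg (by tauto : ¬ (x ∉ s ∧ degS x = 2))]; omega
    have h5 : 5 ≤ ∑ x ∈ Uv, ((if x ∈ s then degS x else 0)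
        + ((if x ∉ s ∧ degS x = 3 then 2 else 0) + (if x ∉ s ∧ degS x = 2 then 1 else 0))) := by
      calc (5:ℕ) ≤ _ := hQ5
        _ ≤ (Uv.biUnion A).card := Finset.card_le_card hcov2
        _ ≤ ∑ x ∈ Uv, (A x).card := Finset.card_biUnion_le
        _ ≤ _ := Finset.sum_le_sum hbound
    rw [Finset.sum_add_distrib, Finset.sum_add_distrib] at h5
    have eA : ∑ x ∈ Uv, (if x ∈ s then degS x else 0) = ∑ x ∈ NS, degS x := by
      rw [← Finset.sum_filter]
      have heq : Uv.filter (fun x => x ∈ s) = NS := by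
        ext a
        simp only [hUv, hNS, Finset.mem_filter, Finset.mem_univ, true_and]
        tauto
      rw [heq]
    have eB : ∑ x ∈ Uv, (if x ∉ s ∧ degS x = 3 then 2 else 0)
        = 2 * (X.filter fun x => G.Adj v x).card := by
      rw [← Finset.sum_filter]
      have heq : Uv.filter (fun x => x ∉ s ∧ degS x = 3) = X.filter fun x => G.Adj v x := by
        ext a
        simp only [hUv, hX, Finset.mem_filter, Finset.mem_univ, true_and]
        tauto
      rw [heq, Finset.sum_const, smul_eq_mul, mul_comm]
    have eC : ∑ x ∈ Uv, (if x ∉ s ∧ degS x = 2 then 1 else 0)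
        = (Y.filter fun x => G.Adj v x).card := by
      rw [← Finset.sum_filter]
      have heq : Uv.filter (fun x => x ∉ s ∧ degS x = 2) = Y.filter fun x => G.Adj v x := by
        ext a
        simp only [hUv, hY, Finset.mem_filter, Finset.mem_univ, true_and]
        tauto
      rw [heq, Finset.sum_const, smul_eq_mul, mul_one]
    rw [eA, eB, eC] at h5
    have ha : NS.card = degS v := rfl
    have hA3 : ∑ x ∈ NS, degS x ≤ 3 * NS.card := by
      calc ∑ x ∈ NS, degS x ≤ ∑ _x ∈ NS, 3 := Finset.sum_le_sum fun x _ => hdeg3 x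
        _ = 3 * NS.card := by rw [Finset.sum_const, smul_eq_mul, mul_comm]
    have hA2 : ∑ x ∈ NS, degS x ≤ 2 * NS.card + (NS.filter fun x => degS x = 3).card := by
      have hstep : ∀ x ∈ NS, degS x ≤ 2 + (if degS x = 3 then 1 else 0) := by
        intro x _
        have := hdeg3 x
        split_ifs with h <;> omega
      calc ∑ x ∈ NS, degS x ≤ ∑ x ∈ NS, (2 + (if degS x = 3 then 1 else 0)) :=
          Finset.sum_le_sum hstep
        _ = 2 * NS.card + (NS.filter fun x => degS x = 3).card := by
          rw [Finset.sum_add_distrib, Finset.sum_const, smul_eq_mul, mul_comm]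
          congr 1
          exact (Finset.card_filter _ _).symm
    have hdv := hdeg3 v
    by_cases h3v : degS v = 3
    · rw [if_pos h3v]; omega
    · rw [if_neg h3v]; omega
  -- sum the per-vertex inequality
  have hbX : ∑ v ∈ s, (X.filter fun x => G.Adj v x).card = 3 * X.card := by
    rw [sum_adj_comm]
    rw [Finset.sum_congr rfl (fun x hx => ((Finset.mem_filter.mp hx).2.2 :
      (s.filter fun a => G.Adj x a).card = 3))]
    rw [Finset.sum_const, smul_eq_mul, mul_comm]
  have hbY : ∑ v ∈ s, (Y.filter fun x => G.Adj v x).card = 2 * Y.card := by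
    rw [sum_adj_comm]
    rw [Finset.sum_congr rfl (fun x hx => ((Finset.mem_filter.mp hx).2.2 :
      (s.filter fun a => G.Adj x a).card = 2))]
    rw [Finset.sum_const, smul_eq_mul, mul_comm]
  have hr : ∑ v ∈ s, ((s.filter fun u => G.Adj v u).filter fun x => degS x = 3).card
      = 3 * (s.filter fun x => degS x = 3).card := by
    simp only [Finset.filter_filter, Finset.card_filter]
    rw [Finset.sum_comm]
    have step : ∀ u ∈ s, (∑ v ∈ s, if G.Adj v u ∧ degS u = 3 then 1 else 0)
        = if degS u = 3 then 3 else 0 := by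
      intro u hu
      by_cases h : degS u = 3
      · rw [if_pos h]
        have : ∀ v ∈ s, (if G.Adj v u ∧ degS u = 3 then 1 else 0)
            = if G.Adj u v then 1 else 0 := by
          intro v _
          exact if_congr (by rw [G.adj_comm]; tauto) rfl rfl
        rw [Finset.sum_congr rfl this, ← Finset.card_filter]
        exact h
      · simp [h]
    rw [Finset.sum_congr rfl step, ← Finset.sum_filter, Finset.sum_const, smul_eq_mul, mul_comm,
      Finset.card_filter]
  have hN := Finset.sum_le_sum key
  have hLHS : ∑ v ∈ s, (18 + (if degS v = 3 then 6 else 0))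
      = 18 * s.card + 6 * (s.filter fun x => degS x = 3).card := by
    rw [Finset.sum_add_distrib, Finset.sum_const, smul_eq_mul, mul_comm]
    congr 1
    rw [← Finset.sum_filter, Finset.sum_const, smul_eq_mul, mul_comm]
  have hRHS : ∑ v ∈ s, (8 * degS v + 10 * (X.filter fun x => G.Adj v x).card
        + 7 * (Y.filter fun x => G.Adj v x).card
        + 2 * ((s.filter fun u => G.Adj v u).filter fun x => degS x = 3).card)
      = 8 * (∑ v ∈ s, degS v) + 10 * (3 * X.card) + 7 * (2 * Y.card)
        + 2 * (3 * (s.filter fun x => degS x = 3).card) := by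
    rw [Finset.sum_add_distrib, Finset.sum_add_distrib, Finset.sum_add_distrib,
      ← Finset.mul_sum, ← Finset.mul_sum, ← Finset.mul_sum, ← Finset.mul_sum,
      hbX, hbY, hr]
  rw [hLHS, hRHS] at hN
  -- edge counting on T
  set W : Finset V := X ∪ Y with hW
  set T : Finset V := s ∪ W with hT
  have hWs : ∀ x ∈ W, x ∉ s := by
    intro x hx
    rcases Finset.mem_union.mp hx with h | h
    · exact (Finset.mem_filter.mp h).2.1
    · exact (Finset.mem_filter.mp h).2.1
  have hXY : Disjoint X Y := by
    rw [Finset.disjoint_left]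
    intro a ha ha'
    have h1 := (Finset.mem_filter.mp ha).2.2
    have h2 := (Finset.mem_filter.mp ha').2.2
    omega
  have hsumW : ∑ w ∈ W, degS w = 3 * X.card + 2 * Y.card := by
    rw [hW, Finset.sum_union hXY]
    congr 1
    · rw [Finset.sum_congr rfl (fun x hx => ((Finset.mem_filter.mp hx).2.2 : degS x = 3)),
        Finset.sum_const, smul_eq_mul, mul_comm]
    · rw [Finset.sum_congr rfl (fun x hx => ((Finset.mem_filter.mp hx).2.2 : degS x = 2)),
        Finset.sum_const, smul_eq_mul, mul_comm]
  have hPT : ((s ×ˢ s).filter fun p : V × V => G.Adj p.1 p.2).card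
      + (3 * X.card + 2 * Y.card) + (3 * X.card + 2 * Y.card)
      ≤ ((T ×ˢ T).filter fun p : V × V => G.Adj p.1 p.2).card := by
    have hsub1 : ((s ×ˢ s).filter fun p : V × V => G.Adj p.1 p.2)
        ∪ (((s ×ˢ W).filter fun p : V × V => G.Adj p.1 p.2)
          ∪ ((W ×ˢ s).filter fun p : V × V => G.Adj p.1 p.2))
        ⊆ (T ×ˢ T).filter fun p : V × V => G.Adj p.1 p.2 := by
      refine Finset.union_subset ?_ (Finset.union_subset ?_ ?_) <;>
        refine Finset.filter_subset_filter _ (Finset.product_subset_product ?_ ?_) <;>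
        first
          | exact Finset.subset_union_left
          | exact Finset.subset_union_right
    have hd1 : Disjoint ((s ×ˢ s).filter fun p : V × V => G.Adj p.1 p.2)
        (((s ×ˢ W).filter fun p : V × V => G.Adj p.1 p.2)
          ∪ ((W ×ˢ s).filter fun p : V × V => G.Adj p.1 p.2)) := by
      rw [Finset.disjoint_left]
      intro p hp hp'
      have hp2 : p.1 ∈ s ∧ p.2 ∈ s := by
        have := (Finset.mem_filter.mp hp).1
        exact ⟨(Finset.mem_product.mp this).1, (Finset.mem_product.mp this).2⟩
      rcases Finset.mem_union.mp hp' with h | h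
      · exact hWs p.2 (Finset.mem_product.mp (Finset.mem_filter.mp h).1).2 hp2.2
      · exact hWs p.1 (Finset.mem_product.mp (Finset.mem_filter.mp h).1).1 hp2.1
    have hd2 : Disjoint ((s ×ˢ W).filter fun p : V × V => G.Adj p.1 p.2)
        ((W ×ˢ s).filter fun p : V × V => G.Adj p.1 p.2) := by
      rw [Finset.disjoint_left]
      intro p hp hp'
      exact hWs p.1 (Finset.mem_product.mp (Finset.mem_filter.mp hp').1).1
        (Finset.mem_product.mp (Finset.mem_filter.mp hp).1).1
    have hcu := Finset.card_le_card hsub1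
    rw [Finset.card_union_of_disjoint hd1, Finset.card_union_of_disjoint hd2] at hcu
    have e1 : ((s ×ˢ W).filter fun p : V × V => G.Adj p.1 p.2).card
        = 3 * X.card + 2 * Y.card := by
      rw [prod_filter_card, sum_adj_comm, ← hsumW]
    have e2 : ((W ×ˢ s).filter fun p : V × V => G.Adj p.1 p.2).card
        = 3 * X.card + 2 * Y.card := by
      rw [prod_filter_card, ← hsumW]
    omega
  have hPs : ((s ×ˢ s).filter fun p : V × V => G.Adj p.1 p.2).card = ∑ v ∈ s, degS v :=
    prod_filter_card G s s
  have hTcard : T.card ≤ s.card + X.card + Y.card := by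
    calc T.card ≤ s.card + W.card := Finset.card_union_le _ _
      _ ≤ s.card + (X.card + Y.card) := by
          exact Nat.add_le_add_left (Finset.card_union_le _ _) _
      _ = s.card + X.card + Y.card := by ring
  have hfinal : 18 * T.card ≤ 8 * ((T ×ˢ T).filter fun p : V × V => G.Adj p.1 p.2).card := by
    rw [hPs] at hPT
    omega
  have hTne : T.Nonempty := hne.mono (Finset.subset_union_left)
  have := hmad T hTne
  rw [show (9 : ℚ)/4 = 18/8 by norm_num] at this
  have hc : ((18 * T.card : ℕ) : ℚ) ≤ ((8 * ((T ×ˢ T).filter fun p : V × V => G.Adj p.1 p.2).card : ℕ) : ℚ) := by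
    exact_mod_cast hfinal
  push_cast at hc
  linarith

/-- Theorem 1: every subcubic graph with `mad(G) < 9/4` has a
DP-5-colorable square. -/
theorem sq_dp5_of_mad_lt {V : Type u} [Fintype V] (G : SimpleGraph V)
    (hsub : ∀ v, G.degree v ≤ 3) (hmad : MadLT G (9 / 4)) :
    DPColorable (graphSq G) 5 := by
  apply dp_of_degenerate
  intro t htne
  exact exists_low_sq_deg G hsub hmad t htne
end

section
/- Every subcubic graph G with mad(G) < 12/5 has a square G² that is DP-6-colorable. -/
open scoped Classical

universe u v

section Helpers

variable {V : Type u}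

/-- Delete all edges incident to `v`. -/
def delAt (G : SimpleGraph V) (v : V) : SimpleGraph V where
  Adj a b := G.Adj a b ∧ a ≠ v ∧ b ≠ v
  symm := by constructor; rintro a b ⟨h, ha, hb⟩; exact ⟨h.symm, hb, ha⟩
  loopless := ⟨fun a h => G.loopless.irrefl a h.1⟩

lemma delAt_adj {G : SimpleGraph V} {v a b : V} :
    (delAt G v).Adj a b ↔ G.Adj a b ∧ a ≠ v ∧ b ≠ v := Iff.rfl

noncomputable def epairs [Fintype V] (G : SimpleGraph V) : ℕ :=
  ((Finset.univ ×ˢ Finset.univ).filter fun p : V × V => G.Adj p.1 p.2).card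

lemma epairs_delAt_lt [Fintype V] (G : SimpleGraph V) {v u : V} (h : G.Adj v u) :
    epairs (delAt G v) < epairs G := by
  apply Finset.card_lt_card
  constructor
  · intro p hp
    simp only [Finset.mem_filter] at hp ⊢
    exact ⟨hp.1, hp.2.1⟩
  · intro hsub
    have hmem : (v, u) ∈ (Finset.univ ×ˢ Finset.univ).filter
        (fun p : V × V => G.Adj p.1 p.2) := by
      simp only [Finset.mem_filter, Finset.mem_product, Finset.mem_univ, true_and]
      exact h
    have := hsub hmem
    simp only [Finset.mem_filter, delAt_adj] at this
    exact this.2.2.1 rfl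

lemma degree_delAt_le [Fintype V] (G : SimpleGraph V) (v x : V) :
    (delAt G v).degree x ≤ G.degree x := by
  apply Finset.card_le_card
  intro y hy
  rw [SimpleGraph.mem_neighborFinset] at hy ⊢
  exact hy.1

lemma madLT_delAt [Fintype V] {G : SimpleGraph V} {q : ℚ} (h : MadLT G q) (v : V) :
    MadLT (delAt G v) q := by
  intro s hs
  refine lt_of_le_of_lt ?_ (h s hs)
  have : ((s ×ˢ s).filter fun p : V × V => (delAt G v).Adj p.1 p.2) ⊆
      ((s ×ˢ s).filter fun p : V × V => G.Adj p.1 p.2) := by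
    intro p hp
    simp only [Finset.mem_filter] at hp ⊢
    exact ⟨hp.1, hp.2.1⟩
  exact_mod_cast Finset.card_le_card this

lemma exists_free_color {H : SimpleGraph (V × ℕ)}
    (hH3 : ∀ u v : V, u ≠ v → ∀ c c₁ c₂ : ℕ,
      H.Adj (u, c) (v, c₁) → H.Adj (u, c) (v, c₂) → c₁ = c₂)
    (L : V → Finset ℕ) (v : V) (hL : 6 ≤ (L v).card)
    (B : Finset V) (hB : B.card ≤ 5) (hv : v ∉ B) (g : V → ℕ) :
    ∃ c ∈ L v, ∀ y ∈ B, ¬ H.Adj (v, c) (y, g y) := by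
  set bad := B.biUnion (fun y => (L v).filter fun c => H.Adj (v, c) (y, g y)) with hbad
  have hone : ∀ y ∈ B, ((L v).filter fun c => H.Adj (v, c) (y, g y)).card ≤ 1 := by
    intro y hy
    apply Finset.card_le_one.mpr
    intro c₁ h₁ c₂ h₂
    have hne : y ≠ v := fun h => hv (h ▸ hy)
    exact hH3 y v hne (g y) c₁ c₂ (Finset.mem_filter.mp h₁).2.symm
      (Finset.mem_filter.mp h₂).2.symm
  have hcard : bad.card ≤ 5 := by
    calc bad.card ≤ ∑ y ∈ B, ((L v).filter fun c => H.Adj (v, c) (y, g y)).card :=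
          Finset.card_biUnion_le
      _ ≤ ∑ _y ∈ B, 1 := Finset.sum_le_sum hone
      _ = B.card := by simp
      _ ≤ 5 := hB
  have hne : (L v \ bad).Nonempty := by
    rw [← Finset.card_pos]
    have h1 : (L v).card ≤ (L v \ bad).card + bad.card := by
      calc (L v).card ≤ (L v ∪ bad).card := Finset.card_le_card Finset.subset_union_left
        _ = (L v \ bad).card + bad.card := by rw [Finset.card_sdiff_add_card]
    omega
  obtain ⟨c, hc⟩ := hne
  rw [Finset.mem_sdiff] at hc
  refine ⟨c, hc.1, fun y hy hadj => ?_⟩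
  exact hc.2 (Finset.mem_biUnion.mpr ⟨y, hy, Finset.mem_filter.mpr ⟨hc.1, hadj⟩⟩)

end Helpers
section Counting

variable {V : Type u} [Fintype V]

lemma deg_two_or_three {G : SimpleGraph V} (hsub : ∀ v, G.degree v ≤ 3)
    (h1 : ∀ v, G.degree v ≠ 1) {v : V} (hv : G.degree v ≠ 0) :
    G.degree v = 2 ∨ G.degree v = 3 := by
  have := hsub v; have := h1 v; omega

/-- If the graph has an edge, it has a degree-1 vertex or an edge between two
degree-2 vertices (else it would violate `MadLT`). -/
lemma exists_config {G : SimpleGraph V} (hsub : ∀ v, G.degree v ≤ 3)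
    (hmad : MadLT G (12 / 5)) {a b : V} (hab : G.Adj a b) :
    (∃ v, G.degree v = 1) ∨ ∃ u v, G.Adj u v ∧ G.degree u = 2 ∧ G.degree v = 2 := by
  by_contra hcon
  push_neg at hcon
  obtain ⟨h1, h2⟩ := hcon
  have hdegpos : ∀ {x y : V}, G.Adj x y → G.degree x ≠ 0 := by
    intro x y hxy
    have : 0 < G.degree x := by
      rw [SimpleGraph.degree_pos_iff_exists_adj]; exact ⟨y, hxy⟩
    omega
  set s : Finset V := Finset.univ.filter (fun v => G.degree v ≠ 0) with hsdef
  have hmem_s : ∀ {x : V}, G.degree x ≠ 0 → x ∈ s := by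
    intro x hx; simp [hsdef, hx]
  have hs : s.Nonempty := ⟨a, hmem_s (hdegpos hab)⟩
  have hnbr_s : ∀ v : V, s.filter (G.Adj v) = G.neighborFinset v := by
    intro v
    ext u
    simp only [Finset.mem_filter, SimpleGraph.mem_neighborFinset]
    exact ⟨fun h => h.2, fun h => ⟨hmem_s (hdegpos h.symm), h⟩⟩
  have hcount : (((s ×ˢ s).filter fun p : V × V => G.Adj p.1 p.2).card)
      = ∑ v ∈ s, G.degree v := by
    rw [Finset.card_filter, Finset.sum_product]
    refine Finset.sum_congr rfl (fun v _ => ?_)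
    rw [← Finset.card_filter, hnbr_s v]
    rfl
  set s2 : Finset V := s.filter (fun v => G.degree v = 2) with hs2def
  set s3 : Finset V := s.filter (fun v => G.degree v = 3) with hs3def
  have e3 : s.filter (fun v => ¬ G.degree v = 2) = s3 := by
    refine Finset.filter_congr (fun v hv => ?_)
    have hv0 : G.degree v ≠ 0 := (Finset.mem_filter.mp hv).2
    have := deg_two_or_three hsub h1 hv0
    exact ⟨fun h => by omega, fun h => by omega⟩
  have hsplit : ∑ v ∈ s, G.degree v = 2 * s2.card + 3 * s3.card := by
    rw [← Finset.sum_filter_add_sum_filter_not s (fun v => G.degree v = 2), e3]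
    have e2 : ∑ v ∈ s2, G.degree v = 2 * s2.card := by
      rw [Finset.sum_congr rfl (fun v hv => (Finset.mem_filter.mp hv).2)]
      simp [mul_comm]
      rfl
    have e3' : ∑ v ∈ s3, G.degree v = 3 * s3.card := by
      rw [Finset.sum_congr rfl (fun v hv => (Finset.mem_filter.mp hv).2)]
      simp [mul_comm]
      rfl
    rw [e2, e3']
  have hcard_s : s.card = s2.card + s3.card := by
    rw [← Finset.card_filter_add_card_filter_not (s := s)
      (p := fun v => G.degree v = 2), e3]
  have hnbr3 : ∀ {v u : V}, G.degree v = 2 → G.Adj v u → G.degree u = 3 := by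
    intro v u hv hvu
    have hu0 : G.degree u ≠ 0 := hdegpos hvu.symm
    rcases deg_two_or_three hsub h1 hu0 with h | h
    · exact absurd h (h2 v u hvu hv)
    · exact h
  have hkey : 2 * s2.card ≤ 3 * s3.card := by
    have hfil : ∀ v ∈ s2, s3.filter (fun u => G.Adj v u) = G.neighborFinset v := by
      intro v hv
      have hv2 : G.degree v = 2 := (Finset.mem_filter.mp hv).2
      ext u
      simp only [Finset.mem_filter, SimpleGraph.mem_neighborFinset]
      constructor
      · exact fun h => h.2
      · intro h
        have hu3 := hnbr3 hv2 h
        have hu_s3 : u ∈ s3 := by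
          rw [hs3def]
          exact Finset.mem_filter.mpr ⟨hmem_s (by omega), hu3⟩
        exact ⟨hu_s3, h⟩
    have lhs : ∑ v ∈ s2, (s3.filter (fun u => G.Adj v u)).card = 2 * s2.card := by
      have hval : ∀ v ∈ s2, (s3.filter (fun u => G.Adj v u)).card = 2 := by
        intro v hv
        rw [hfil v hv]
        exact (Finset.mem_filter.mp hv).2
      rw [Finset.sum_congr rfl hval]
      simp [mul_comm]
    have rhs : ∑ u ∈ s3, (s2.filter (fun v => G.Adj v u)).card ≤ 3 * s3.card := by
      calc ∑ u ∈ s3, (s2.filter (fun v => G.Adj v u)).card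
          ≤ ∑ _u ∈ s3, 3 := by
            refine Finset.sum_le_sum (fun u hu => ?_)
            have hsub' : s2.filter (fun v => G.Adj v u) ⊆ G.neighborFinset u := by
              intro v hv
              rw [SimpleGraph.mem_neighborFinset]
              exact (Finset.mem_filter.mp hv).2.symm
            exact le_trans (Finset.card_le_card hsub') (hsub u)
        _ = 3 * s3.card := by simp [mul_comm]
    have swap : ∑ v ∈ s2, (s3.filter (fun u => G.Adj v u)).card
        = ∑ u ∈ s3, (s2.filter (fun v => G.Adj v u)).card := by
      simp only [Finset.card_filter]
      exact Finset.sum_comm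
    omega
  -- now contradict hmad
  have hineq : 12 * s.card ≤ 5 * ∑ v ∈ s, G.degree v := by
    rw [hsplit, hcard_s]; omega
  have hm := hmad s hs
  rw [hcount] at hm
  have hcast : ((12 : ℚ) * s.card) ≤ 5 * (∑ v ∈ s, G.degree v : ℕ) := by
    exact_mod_cast hineq
  have h5 : (0:ℚ) < 5 := by norm_num
  nlinarith [hm]

end Counting
section SquareLemmas

variable {V : Type u}

lemma nbhd_one [Fintype V] {G : SimpleGraph V} {v : V} (h : G.degree v = 1) :
    ∃ u, ∀ x, G.Adj v x ↔ x = u := by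
  obtain ⟨u, hu⟩ := Finset.card_eq_one.mp h
  refine ⟨u, fun x => ?_⟩
  constructor
  · intro hx
    have : x ∈ G.neighborFinset v := (SimpleGraph.mem_neighborFinset _ _ _).mpr hx
    rw [hu, Finset.mem_singleton] at this
    exact this
  · rintro rfl
    have : x ∈ G.neighborFinset v := by rw [hu]; exact Finset.mem_singleton_self x
    exact (SimpleGraph.mem_neighborFinset _ _ _).mp this

lemma nbhd_two [Fintype V] {G : SimpleGraph V} {v u : V} (h : G.degree v = 2)
    (hu : G.Adj v u) :
    ∃ w, w ≠ u ∧ ∀ x, G.Adj v x ↔ (x = u ∨ x = w) := by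
  obtain ⟨a, b, hab, hset⟩ := Finset.card_eq_two.mp h
  have humem : u ∈ G.neighborFinset v := (SimpleGraph.mem_neighborFinset _ _ _).mpr hu
  rw [hset, Finset.mem_insert, Finset.mem_singleton] at humem
  have key : ∀ x, G.Adj v x ↔ (x = a ∨ x = b) := by
    intro x
    rw [← SimpleGraph.mem_neighborFinset, hset, Finset.mem_insert, Finset.mem_singleton]
  rcases humem with rfl | rfl
  · exact ⟨b, fun hb => hab hb.symm, fun x => (key x)⟩
  · refine ⟨a, fun ha => hab ha, fun x => ?_⟩
    rw [key x]; tauto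

/-- Restriction of a cover graph to a smaller base graph. -/
def restrictH (G' : SimpleGraph V) (H : SimpleGraph (V × ℕ)) : SimpleGraph (V × ℕ) where
  Adj p q := H.Adj p q ∧ (p.1 = q.1 ∨ (graphSq G').Adj p.1 q.1)
  symm := by
    constructor
    rintro p q ⟨h, hor⟩
    refine ⟨h.symm, ?_⟩
    rcases hor with h' | h'
    · exact Or.inl h'.symm
    · exact Or.inr h'.symm
  loopless := ⟨fun p hp => H.loopless.irrefl p hp.1⟩

lemma cover_restrict {G : SimpleGraph V} (G' : SimpleGraph V) {L : V → Finset ℕ}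
    {H : SimpleGraph (V × ℕ)} (hc : IsDPCover (graphSq G) L H) :
    IsDPCover (graphSq G') L (restrictH G' H) := by
  obtain ⟨h1, h2, h3⟩ := hc
  refine ⟨?_, ?_, ?_⟩
  · intro v c hcm c' hcm' hne
    exact ⟨h1 v c hcm c' hcm' hne, Or.inl rfl⟩
  · rintro u v c c' ⟨h, hor⟩
    exact ⟨(h2 u v c c' h).1, (h2 u v c c' h).2.1, hor⟩
  · intro u v hne c c₁ c₂ ha hb
    exact h3 u v hne c c₁ c₂ ha.1 hb.1

lemma colorable_of_no_edge [Fintype V] {G : SimpleGraph V} (h : ∀ x y, ¬ G.Adj x y) :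
    DPColorable (graphSq G) 6 := by
  intro L H hcov hL
  have hne : ∀ v, (L v).Nonempty := by
    intro v
    rw [← Finset.card_pos]
    have := hL v; omega
  choose f hf using hne
  refine ⟨f, hf, fun p q hpq hadj => ?_⟩
  rcases (hcov.2.1 p q _ _ hadj).2.2 with rfl | hsq
  · exact hpq rfl
  · rcases hsq.2 with he | ⟨w, h1', h2'⟩
    · exact h p q he
    · exact h p w h1'

end SquareLemmas
section Main

variable {V : Type u} [Fintype V]

lemma epairs_zero_no_edge {G : SimpleGraph V} (h : epairs G = 0) : ∀ x y, ¬ G.Adj x y := by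
  intro x y hxy
  have hmem : (x, y) ∈ (Finset.univ ×ˢ Finset.univ).filter
      (fun p : V × V => G.Adj p.1 p.2) := by
    simp only [Finset.mem_filter, Finset.mem_product, Finset.mem_univ, true_and]
    exact hxy
  have := Finset.card_pos.mpr ⟨(x, y), hmem⟩
  unfold epairs at h
  omega

lemma aux_main {V : Type u} [Fintype V] :
    ∀ (n : ℕ) (G : SimpleGraph V), epairs G ≤ n → (∀ v, G.degree v ≤ 3) →
      MadLT G (12 / 5) → DPColorable (graphSq G) 6 := by
  intro n
  induction n with
  | zero =>
    intro G hep _ _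
    exact colorable_of_no_edge (epairs_zero_no_edge (Nat.le_zero.mp hep))
  | succ n ih =>
    intro G hep hsub hmad
    by_cases hedge : ∃ x y, G.Adj x y
    · obtain ⟨a, b, hab⟩ := hedge
      rcases exists_config hsub hmad hab with ⟨v, hdeg1⟩ | ⟨u, v, huv, hu2, hv2⟩
      -- Case A : a vertex of degree 1
      · obtain ⟨u, hu⟩ := nbhd_one hdeg1
        have hvu : G.Adj v u := (hu u).mpr rfl
        set G' := delAt G v with hG'def
        have hep' : epairs G' ≤ n := by
          have hlt := epairs_delAt_lt G hvu
          rw [← hG'def] at hlt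
          omega
        have hcol' := ih G' hep' (fun x => le_trans (degree_delAt_le G v x) (hsub x))
          (madLT_delAt hmad v)
        intro L H hcov hL
        obtain ⟨f', hf'mem, hf'⟩ := hcol' L (restrictH G' H) (cover_restrict G' hcov) hL
        set B : Finset V := (insert u (G.neighborFinset u)).erase v with hBdef
        have hBcard : B.card ≤ 5 := by
          calc B.card ≤ (insert u (G.neighborFinset u)).card := Finset.card_erase_le
            _ ≤ (G.neighborFinset u).card + 1 := Finset.card_insert_le _ _
            _ ≤ 3 + 1 := by
                have h3 := hsub u
                have hdu : (G.neighborFinset u).card = G.degree u := rfl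
                omega
            _ ≤ 5 := by omega
        have hvB : v ∉ B := Finset.notMem_erase _ _
        obtain ⟨c, hcL, hcfree⟩ := exists_free_color hcov.2.2 L v (hL v) B hBcard hvB f'
        set f := Function.update f' v c with hfdef
        have hfv : f v = c := Function.update_self _ _ _
        have hfother : ∀ {x}, x ≠ v → f x = f' x := fun hx => Function.update_of_ne hx _ _
        have hball : ∀ {y}, y ≠ v → (graphSq G).Adj v y → y ∈ B := by
          intro y hyv hadj
          rw [hBdef, Finset.mem_erase]
          refine ⟨hyv, ?_⟩
          rcases hadj.2 with he | ⟨z, h1, h2⟩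
          · rw [(hu y).mp he]
            exact Finset.mem_insert_self _ _
          · have hz : z = u := (hu z).mp h1
            subst hz
            exact Finset.mem_insert_of_mem ((SimpleGraph.mem_neighborFinset _ _ _).mpr h2)
        have hsq' : ∀ {x y}, x ≠ v → y ≠ v → (graphSq G).Adj x y → (graphSq G').Adj x y := by
          intro x y hxv hyv hadj
          obtain ⟨hne, hcase⟩ := hadj
          refine ⟨hne, ?_⟩
          rcases hcase with he | ⟨z, h1, h2⟩
          · exact Or.inl ⟨he, hxv, hyv⟩
          · by_cases hzv : z = v
            · subst hzv
              have hx : x = u := (hu x).mp h1.symm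
              have hy : y = u := (hu y).mp h2
              exact absurd (hx.trans hy.symm) hne
            · exact Or.inr ⟨z, ⟨h1, hxv, hzv⟩, ⟨h2, hzv, hyv⟩⟩
        refine ⟨f, ?_, ?_⟩
        · intro x
          by_cases hx : x = v
          · subst hx; rw [hfv]; exact hcL
          · rw [hfother hx]; exact hf'mem x
        · intro p q hpq hadj
          by_cases hpv : p = v
          · subst hpv
            have hqv : q ≠ p := fun h => hpq h.symm
            rw [hfv, hfother hqv] at hadj
            rcases (hcov.2.1 p q _ _ hadj).2.2 with h | hsq
            · exact hqv h.symm
            · exact hcfree q (hball hqv hsq) hadj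
          · by_cases hqv : q = v
            · subst hqv
              rw [hfv, hfother hpv] at hadj
              have hadj' := hadj.symm
              rcases (hcov.2.1 q p _ _ hadj').2.2 with h | hsq
              · exact hpv h.symm
              · exact hcfree p (hball hpv hsq) hadj'
            · rw [hfother hpv, hfother hqv] at hadj
              rcases (hcov.2.1 p q _ _ hadj).2.2 with h | hsq
              · exact hpq h
              · exact hf' p q hpq ⟨hadj, Or.inr (hsq' hpv hqv hsq)⟩
      -- Case B : an edge between two degree-2 vertices
      · obtain ⟨x, hxnev, hNu⟩ := nbhd_two hu2 huv
        obtain ⟨w, hwneu, hNv⟩ := nbhd_two hv2 huv.symm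
        have hvu : G.Adj v u := huv.symm
        have hux : G.Adj u x := (hNu x).mpr (Or.inr rfl)
        have hvw : G.Adj v w := (hNv w).mpr (Or.inr rfl)
        set G' := delAt G v with hG'def
        have hep' : epairs G' ≤ n := by
          have hlt := epairs_delAt_lt G hvu
          rw [← hG'def] at hlt
          omega
        have hcol' := ih G' hep' (fun z => le_trans (degree_delAt_le G v z) (hsub z))
          (madLT_delAt hmad v)
        intro L H hcov hL
        obtain ⟨f', hf'mem, hf'⟩ := hcol' L (restrictH G' H) (cover_restrict G' hcov) hL
        set Bu : Finset V := insert w (insert x ((G.neighborFinset x).erase u)) with hBudef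
        have hBucard : Bu.card ≤ 5 := by
          have h1 : ((G.neighborFinset x).erase u).card ≤ 2 := by
            have hmemu : u ∈ G.neighborFinset x :=
              (SimpleGraph.mem_neighborFinset _ _ _).mpr hux.symm
            have h3 := hsub x
            have hdx : (G.neighborFinset x).card = G.degree x := rfl
            rw [Finset.card_erase_of_mem hmemu]
            omega
          have i1 := Finset.card_insert_le x ((G.neighborFinset x).erase u)
          have i2 := Finset.card_insert_le w (insert x ((G.neighborFinset x).erase u))
          rw [hBudef]
          omega
        have huBu : u ∉ Bu := by
          rw [hBudef]
          intro hmem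
          rcases Finset.mem_insert.mp hmem with h | hmem2
          · exact hwneu h.symm
          · rcases Finset.mem_insert.mp hmem2 with h | hmem3
            · exact hux.ne h
            · exact (Finset.mem_erase.mp hmem3).1 rfl
        obtain ⟨cu, hcuL, hcufree⟩ := exists_free_color hcov.2.2 L u (hL u) Bu hBucard huBu f'
        set f₁ := Function.update f' u cu with hf1def
        have hf1u : f₁ u = cu := Function.update_self _ _ _
        have hf1other : ∀ {z}, z ≠ u → f₁ z = f' z := fun hz => Function.update_of_ne hz _ _
        set Bv : Finset V := insert u (insert w (insert x ((G.neighborFinset w).erase v)))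
          with hBvdef
        have hBvcard : Bv.card ≤ 5 := by
          have h1 : ((G.neighborFinset w).erase v).card ≤ 2 := by
            have hmemv : v ∈ G.neighborFinset w :=
              (SimpleGraph.mem_neighborFinset _ _ _).mpr hvw.symm
            have h3 := hsub w
            have hdw : (G.neighborFinset w).card = G.degree w := rfl
            rw [Finset.card_erase_of_mem hmemv]
            omega
          have i1 := Finset.card_insert_le x ((G.neighborFinset w).erase v)
          have i2 := Finset.card_insert_le w (insert x ((G.neighborFinset w).erase v))
          have i3 := Finset.card_insert_le u (insert w (insert x ((G.neighborFinset w).erase v)))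
          rw [hBvdef]
          omega
        have hvBv : v ∉ Bv := by
          rw [hBvdef]
          intro hmem
          rcases Finset.mem_insert.mp hmem with h | hmem2
          · exact huv.ne' h
          · rcases Finset.mem_insert.mp hmem2 with h | hmem3
            · exact hvw.ne h
            · rcases Finset.mem_insert.mp hmem3 with h | hmem4
              · exact hxnev h.symm
              · exact (Finset.mem_erase.mp hmem4).1 rfl
        obtain ⟨cv, hcvL, hcvfree⟩ := exists_free_color hcov.2.2 L v (hL v) Bv hBvcard hvBv f₁
        set f := Function.update f₁ v cv with hfdef
        have hfv : f v = cv := Function.update_self _ _ _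
        have hfother : ∀ {z}, z ≠ v → f z = f₁ z := fun hz => Function.update_of_ne hz _ _
        have hballu : ∀ {y}, y ≠ u → y ≠ v → (graphSq G).Adj u y → y ∈ Bu := by
          intro y hyu hyv hadj
          rw [hBudef]
          rcases hadj.2 with he | ⟨z, h1, h2⟩
          · rcases (hNu y).mp he with h | h
            · exact absurd h hyv
            · subst h
              exact Finset.mem_insert_of_mem (Finset.mem_insert_self _ _)
          · rcases (hNu z).mp h1 with hz | hz
            · subst hz
              rcases (hNv y).mp h2 with h | h
              · exact absurd h hyu
              · subst h
                exact Finset.mem_insert_self _ _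
            · subst hz
              refine Finset.mem_insert_of_mem (Finset.mem_insert_of_mem ?_)
              exact Finset.mem_erase.mpr ⟨hyu, (SimpleGraph.mem_neighborFinset _ _ _).mpr h2⟩
        have hballv : ∀ {y}, y ≠ v → (graphSq G).Adj v y → y ∈ Bv := by
          intro y hyv hadj
          rw [hBvdef]
          rcases hadj.2 with he | ⟨z, h1, h2⟩
          · rcases (hNv y).mp he with h | h
            · subst h
              exact Finset.mem_insert_self _ _
            · subst h
              exact Finset.mem_insert_of_mem (Finset.mem_insert_self _ _)
          · rcases (hNv z).mp h1 with hz | hz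
            · subst hz
              rcases (hNu y).mp h2 with h | h
              · exact absurd h hyv
              · subst h
                exact Finset.mem_insert_of_mem
                  (Finset.mem_insert_of_mem (Finset.mem_insert_self _ _))
            · subst hz
              refine Finset.mem_insert_of_mem
                (Finset.mem_insert_of_mem (Finset.mem_insert_of_mem ?_))
              exact Finset.mem_erase.mpr ⟨hyv, (SimpleGraph.mem_neighborFinset _ _ _).mpr h2⟩
        have hsq' : ∀ {p q}, p ≠ v → q ≠ v → p ≠ u → q ≠ u →
            (graphSq G).Adj p q → (graphSq G').Adj p q := by
          intro p q hpv hqv hpu hqu hadj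
          obtain ⟨hne, hcase⟩ := hadj
          refine ⟨hne, ?_⟩
          rcases hcase with he | ⟨z, h1, h2⟩
          · exact Or.inl ⟨he, hpv, hqv⟩
          · by_cases hzv : z = v
            · subst hzv
              rcases (hNv p).mp h1.symm with h | h
              · exact absurd h hpu
              · rcases (hNv q).mp h2 with h' | h'
                · exact absurd h' hqu
                · exact absurd (h.trans h'.symm) hne
            · exact Or.inr ⟨z, ⟨h1, hpv, hzv⟩, ⟨h2, hzv, hqv⟩⟩
        refine ⟨f, ?_, ?_⟩
        · intro z
          by_cases hz : z = v
          · subst hz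
            rw [hfv]
            exact hcvL
          · rw [hfother hz]
            by_cases hz' : z = u
            · subst hz'
              rw [hf1u]
              exact hcuL
            · rw [hf1other hz']
              exact hf'mem z
        · intro p q hpq hadj
          by_cases hpv : p = v
          · subst hpv
            have hqv : q ≠ p := fun h => hpq h.symm
            rw [hfv, hfother hqv] at hadj
            rcases (hcov.2.1 p q _ _ hadj).2.2 with h | hsq
            · exact hqv h.symm
            · exact hcvfree q (hballv hqv hsq) hadj
          · by_cases hqv : q = v
            · subst hqv
              rw [hfv, hfother hpv] at hadj
              have hadj' := hadj.symm
              rcases (hcov.2.1 q p _ _ hadj').2.2 with h | hsq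
              · exact hpv h.symm
              · exact hcvfree p (hballv hpv hsq) hadj'
            · rw [hfother hpv, hfother hqv] at hadj
              by_cases hpu : p = u
              · subst hpu
                have hqu : q ≠ p := fun h => hpq h.symm
                rw [hf1u, hf1other hqu] at hadj
                rcases (hcov.2.1 p q _ _ hadj).2.2 with h | hsq
                · exact hqu h.symm
                · exact hcufree q (hballu hqu hqv hsq) hadj
              · by_cases hqu : q = u
                · subst hqu
                  rw [hf1u, hf1other hpu] at hadj
                  have hadj' := hadj.symm
                  rcases (hcov.2.1 q p _ _ hadj').2.2 with h | hsq
                  · exact hpu h.symm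
                  · exact hcufree p (hballu hpu hpv hsq) hadj'
                · rw [hf1other hpu, hf1other hqu] at hadj
                  rcases (hcov.2.1 p q _ _ hadj).2.2 with h | hsq
                  · exact hpq h
                  · exact hf' p q hpq ⟨hadj, Or.inr (hsq' hpv hqv hpu hqu hsq)⟩
    · push_neg at hedge
      exact colorable_of_no_edge hedge

end Main

/-- Theorem 2: every subcubic graph with `mad(G) < 12/5` has a
DP-6-colorable square. -/
theorem sq_dp6_of_mad_lt {V : Type u} [Fintype V] (G : SimpleGraph V)
    (hsub : ∀ v, G.degree v ≤ 3) (hmad : MadLT G (12 / 5)) :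
    DPColorable (graphSq G) 6 := by
  exact aux_main (epairs G) G le_rfl hsub hmad
end
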